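/- arXiv:2003.01679 — 2 statements merged into one kernel-verified Lean document; each statement's English description precedes it below -/
import Mathlib

section
/- If n = ℓ^d for some ℓ ∈ ℕ, then every edge-isoperimetric minimizer C ⊂ ℤ^d with #C = n satisfies #Θ_d(C) ≥ 2d·n^{(d−1)/d}, with equality for the cube {1,…,ℓ}^d; in particular EIP^d(ℓ^d) = 2d·ℓ^{d−1}. -/
/-- Two points of `ℤ^d` are adjacent (nearest neighbors) if their Euclidean
distance is 1, i.e. `∑ i (x i - y i)^2 = 1`. -/
def adj {d : ℕ} (x y : Fin d → ℤ) : Prop := (∑ i, (x i - y i) ^ 2) = 1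

/-- The edge boundary `Θ_d(C)`. -/
def edgeBoundary {d : ℕ} (C : Set (Fin d → ℤ)) : Set ((Fin d → ℤ) × (Fin d → ℤ)) :=
  {p | p.1 ∈ C ∧ p.2 ∉ C ∧ adj p.1 p.2}

/-- The edge perimeter `#Θ_d(C)`. -/
noncomputable def thetaCard {d : ℕ} (C : Set (Fin d → ℤ)) : ℕ := (edgeBoundary C).ncard

/-- The set of ordered bonded pairs in `C`; its cardinality is `2·b(C)`
where `b(C)` is the number of bonds. -/
def bondPairs {d : ℕ} (C : Set (Fin d → ℤ)) : Set ((Fin d → ℤ) × (Fin d → ℤ)) :=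
  {p | p.1 ∈ C ∧ p.2 ∈ C ∧ adj p.1 p.2}

/-- `2·b(C)`, twice the number of bonds of `C`. -/
noncomputable def bondsTwice {d : ℕ} (C : Set (Fin d → ℤ)) : ℕ := (bondPairs C).ncard

/-- The minimal edge perimeter among subsets of `ℤ^d` of cardinality `n`. -/
noncomputable def EIP (d n : ℕ) : ℕ :=
  sInf {m | ∃ C : Set (Fin d → ℤ), C.Finite ∧ C.ncard = n ∧ thetaCard C = m}

open scoped NNReal


theorem adj_iff {d : ℕ} {x y : Fin d → ℤ} :
    adj x y ↔ ∃ i, (∀ j, j ≠ i → x j = y j) ∧ (x i - y i = 1 ∨ x i - y i = -1) := by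
  constructor
  · intro h
    unfold adj at h
    have hex : ∃ i, (x i - y i) ^ 2 ≠ 0 := by
      by_contra hc
      push_neg at hc
      simp only [Finset.sum_eq_zero (fun i _ => hc i)] at h
      exact one_ne_zero h.symm
    obtain ⟨i, hi⟩ := hex
    have h1 : 1 ≤ (x i - y i) ^ 2 := by
      have := sq_nonneg (x i - y i)
      omega
    have hsum := Finset.add_sum_erase Finset.univ (fun j => (x j - y j) ^ 2) (Finset.mem_univ i)
    have hrn : 0 ≤ ∑ j ∈ Finset.univ.erase i, (x j - y j) ^ 2 :=
      Finset.sum_nonneg fun j _ => sq_nonneg _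
    have hrest : ∑ j ∈ Finset.univ.erase i, (x j - y j) ^ 2 = 0 := by omega
    refine ⟨i, fun j hj => ?_, ?_⟩
    · have hz : (x j - y j) ^ 2 = 0 :=
        (Finset.sum_eq_zero_iff_of_nonneg
          (fun k (_ : k ∈ Finset.univ.erase i) => sq_nonneg (x k - y k))).mp hrest j
          (Finset.mem_erase.mpr ⟨hj, Finset.mem_univ j⟩)
      have := pow_eq_zero_iff (n := 2) (by norm_num) |>.mp hz
      linarith [sub_eq_zero.mp this]
    · have hsq : (x i - y i) ^ 2 = 1 := by omega
      exact Int.isUnit_iff.mp (IsUnit.of_mul_eq_one _ (by rw [← sq]; exact hsq))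
  · rintro ⟨i, hoff, hi⟩
    unfold adj
    rw [Finset.sum_eq_single_of_mem i (Finset.mem_univ i)]
    · rcases hi with h | h <;> rw [h] <;> norm_num
    · intro j _ hj
      rw [sub_eq_zero.mpr (hoff j hj)]
      ring

theorem EIPaux_geom_le {ι : Type*} (s : Finset ι) (hs : s.Nonempty) (z : ι → ℝ≥0) :
    (∏ i ∈ s, z i) ≤ ((∑ i ∈ s, z i) / s.card) ^ (s.card : ℕ) := by
  set k := s.card with hk
  have hkpos : 0 < k := Finset.card_pos.mpr hs
  have hk0 : (k : ℝ≥0) ≠ 0 := by positivity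
  have hkr : (k : ℝ) ≠ 0 := by positivity
  have hgm := NNReal.geom_mean_le_arith_mean_weighted s (fun _ => (k : ℝ≥0)⁻¹) z
    (by rw [Finset.sum_const, ← hk, nsmul_eq_mul, mul_inv_cancel₀ hk0])
  have hcoe : (((k : ℝ≥0)⁻¹ : ℝ≥0) : ℝ) = (k : ℝ)⁻¹ := by push_cast; ring
  simp only [hcoe] at hgm
  have h1 : (∏ i ∈ s, z i ^ ((k : ℝ)⁻¹)) ^ k = ∏ i ∈ s, z i := by
    rw [← Finset.prod_pow]
    refine Finset.prod_congr rfl fun i _ => ?_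
    rw [← NNReal.rpow_natCast (z i ^ _) k, ← NNReal.rpow_mul,
      inv_mul_cancel₀ hkr, NNReal.rpow_one]
  calc (∏ i ∈ s, z i) = (∏ i ∈ s, z i ^ ((k : ℝ)⁻¹)) ^ k := h1.symm
    _ ≤ (∑ i ∈ s, (k : ℝ≥0)⁻¹ * z i) ^ k := pow_le_pow_left' hgm k
    _ = ((∑ i ∈ s, z i) / k) ^ k := by
        rw [← Finset.mul_sum, div_eq_mul_inv, mul_comm]

theorem EIPaux_holder {τ ι : Type*} (T : Finset τ) (s : Finset ι) (hs : s.Nonempty)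
    (β : ℝ≥0) (b : τ → ℝ≥0) (c : ι → τ → ℝ≥0)
    (h : ∀ t ∈ T, b t ^ s.card ≤ β * ∏ i ∈ s, c i t) :
    (∑ t ∈ T, b t) ^ s.card ≤ β * ∏ i ∈ s, (∑ t ∈ T, c i t) := by
  set k := s.card with hk
  have hkpos : 0 < k := Finset.card_pos.mpr hs
  have hkr : (k : ℝ) ≠ 0 := by positivity
  by_cases hzero : ∃ i0 ∈ s, (∑ t ∈ T, c i0 t) = 0
  · obtain ⟨i0, hi0, hS0⟩ := hzero
    have hb0 : ∀ t ∈ T, b t = 0 := by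
      intro t ht
      have hc0 : c i0 t = 0 := by
        have := (Finset.sum_eq_zero_iff).mp hS0 t ht
        exact this
      have : b t ^ k ≤ 0 := by
        have := h t ht
        rwa [Finset.prod_eq_zero hi0 hc0, mul_zero] at this
      have := le_antisymm this (zero_le)
      exact pow_eq_zero_iff hkpos.ne' |>.mp this
    rw [Finset.sum_eq_zero hb0, zero_pow hkpos.ne']
    exact zero_le
  · push_neg at hzero
    set S : ι → ℝ≥0 := fun i => ∑ t ∈ T, c i t with hS
    set P : ℝ≥0 := β * ∏ i ∈ s, S i with hP
    set Q : ℝ≥0 := P ^ ((k : ℝ)⁻¹) with hQ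
    have hQk : Q ^ k = P := by
      rw [hQ, ← NNReal.rpow_natCast (P ^ _) k, ← NNReal.rpow_mul,
        inv_mul_cancel₀ hkr, NNReal.rpow_one]
    set u : τ → ℝ≥0 := fun t => (∑ i ∈ s, c i t / S i) / k with hu
    have key : ∀ t ∈ T, b t ≤ Q * u t := by
      intro t ht
      have hprod : ∏ i ∈ s, c i t = (∏ i ∈ s, S i) * ∏ i ∈ s, (c i t / S i) := by
        rw [← Finset.prod_mul_distrib]
        exact Finset.prod_congr rfl fun i hi => by
          rw [mul_comm, div_mul_cancel₀ _ (hzero i hi)]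
      have hgl := EIPaux_geom_le s hs (fun i => c i t / S i)
      have hbk : b t ^ k ≤ (Q * u t) ^ k := by
        rw [mul_pow, hQk]
        calc b t ^ k ≤ β * ∏ i ∈ s, c i t := h t ht
          _ = β * ((∏ i ∈ s, S i) * ∏ i ∈ s, (c i t / S i)) := by rw [hprod]
          _ ≤ β * ((∏ i ∈ s, S i) * u t ^ k) := by
              refine mul_le_mul_right (mul_le_mul_right ?_ _) _
              simpa [hu, hk] using hgl
          _ = P * u t ^ k := by rw [hP]; ring
      exact le_of_pow_le_pow_left₀ hkpos.ne' (zero_le) hbk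
    have hsumu : ∑ t ∈ T, u t ≤ 1 := by
      have : ∑ t ∈ T, u t = (∑ i ∈ s, (∑ t ∈ T, c i t) / S i) / k := by
        rw [hu]
        rw [← Finset.sum_div]
        congr 1
        rw [Finset.sum_comm]
        exact Finset.sum_congr rfl fun i _ => by rw [Finset.sum_div]
      rw [this]
      have heq : ∑ i ∈ s, (∑ t ∈ T, c i t) / S i = k := by
        rw [Finset.sum_congr rfl (fun i hi => div_self (hzero i hi))]
        simp [hk]
      rw [heq, div_self]
      positivity
    calc (∑ t ∈ T, b t) ^ k ≤ (Q * ∑ t ∈ T, u t) ^ k := by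
          refine pow_le_pow_left' ?_ k
          rw [Finset.mul_sum]
          exact Finset.sum_le_sum key
      _ ≤ (Q * 1) ^ k := pow_le_pow_left' (mul_le_mul_right hsumu Q) k
      _ = P := by rw [mul_one, hQk]

/-- Zero out all coordinates outside `s`. -/
def Pz {d : ℕ} (s : Finset (Fin d)) (A : Finset (Fin d → ℤ)) : Finset (Fin d → ℤ) :=
  A.image fun x j => if j ∈ s then x j else 0

theorem Pz_zero_off {d : ℕ} {s : Finset (Fin d)} {A : Finset (Fin d → ℤ)}
    {x : Fin d → ℤ} (hx : x ∈ Pz s A) {j : Fin d} (hj : j ∉ s) : x j = 0 := by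
  obtain ⟨y, _, rfl⟩ := Finset.mem_image.mp hx
  simp [hj]

theorem Pz_Pz {d : ℕ} {t s : Finset (Fin d)} (hts : t ⊆ s) (A : Finset (Fin d → ℤ)) :
    Pz t (Pz s A) = Pz t A := by
  unfold Pz
  rw [Finset.image_image]
  refine Finset.image_congr fun x _ => ?_
  funext j
  by_cases hj : j ∈ t
  · simp [hj, hts hj]
  · simp [hj]

theorem Pz_nonempty {d : ℕ} {s : Finset (Fin d)} {A : Finset (Fin d → ℤ)}
    (hA : A.Nonempty) : (Pz s A).Nonempty := hA.image _

theorem Pz_mono {d : ℕ} {s : Finset (Fin d)} {A B : Finset (Fin d → ℤ)}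
    (h : A ⊆ B) : Pz s A ⊆ Pz s B := Finset.image_subset_image h

theorem EIPaux_LW {d : ℕ} (s : Finset (Fin d)) :
    ∀ A : Finset (Fin d → ℤ), A.Nonempty →
      (Pz s A).card ^ (s.card - 1) ≤ ∏ i ∈ s, (Pz (s.erase i) A).card := by
  induction s using Finset.induction_on with
  | empty => intro A hA; simp
  | @insert i0 s' hi0 ih =>
    intro A hA
    set k := s'.card with hk
    rcases Nat.eq_zero_or_pos k with hk0 | hkpos
    · have hs' : s' = ∅ := Finset.card_eq_zero.mp hk0
      subst hs'
      rw [Finset.prod_insert hi0, Finset.prod_empty, mul_one,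
        Finset.erase_insert (Finset.notMem_empty i0)]
      have : (insert i0 (∅ : Finset (Fin d))).card - 1 = 0 := by simp
      rw [this, pow_zero]
      exact Nat.one_le_iff_ne_zero.mpr (Finset.card_ne_zero_of_mem (Pz_nonempty hA).choose_spec)
    · -- main case: k ≥ 1
      have hs'ne : s'.Nonempty := Finset.card_pos.mp hkpos
      set s : Finset (Fin d) := insert i0 s' with hsdef
      have hcard : s.card - 1 = k := by
        rw [hsdef, Finset.card_insert_of_notMem hi0]
        omega
      set B : Finset (Fin d → ℤ) := Pz s A with hB
      have hBne : B.Nonempty := Pz_nonempty hA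
      set T : Finset ℤ := B.image (fun x => x i0) with hT
      set Bt : ℤ → Finset (Fin d → ℤ) := fun t => B.filter (fun x => x i0 = t) with hBt
      have f1 : B.card = ∑ t ∈ T, (Bt t).card :=
        Finset.card_eq_sum_card_fiberwise (fun x hx => Finset.mem_image_of_mem _ hx)
      have fne : ∀ t ∈ T, (Bt t).Nonempty := by
        intro t ht
        obtain ⟨x, hx, rfl⟩ := Finset.mem_image.mp ht
        exact ⟨x, Finset.mem_filter.mpr ⟨hx, rfl⟩⟩
      set b : ℤ → ℕ := fun t => (Bt t).card with hb
      set c : Fin d → ℤ → ℕ := fun i t => (Pz (s.erase i) (Bt t)).card with hc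
      set β : ℕ := (Pz s' A).card with hβ
      have f2 : ∀ t ∈ T, (Pz s' (Bt t)).card = b t := by
        intro t ht
        apply Finset.card_image_of_injOn
        intro x hx y hy hxy
        funext j
        by_cases hj1 : j ∈ s'
        · have := congrFun hxy j
          simpa [hj1] using this
        · by_cases hj2 : j = i0
          · subst hj2
            rw [(Finset.mem_filter.mp hx).2, (Finset.mem_filter.mp hy).2]
          · have hjs : j ∉ s := by simp [hsdef, hj1, hj2]
            rw [Pz_zero_off (Finset.mem_filter.mp hx).1 hjs,
              Pz_zero_off (Finset.mem_filter.mp hy).1 hjs]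
      have f3 : ∀ t ∈ T, b t ≤ β := by
        intro t ht
        rw [← f2 t ht]
        calc (Pz s' (Bt t)).card ≤ (Pz s' B).card :=
              Finset.card_le_card (Pz_mono (Finset.filter_subset _ _))
          _ = β := by rw [hB, Pz_Pz (Finset.subset_insert i0 s')]
      have f6 : ∀ t ∈ T, b t ^ k ≤ β * ∏ i ∈ s', c i t := by
        intro t ht
        have hih := ih (Bt t) (fne t ht)
        rw [f2 t ht] at hih
        have f5 : ∀ i ∈ s', (Pz (s'.erase i) (Bt t)).card ≤ c i t := by
          intro i hi
          have hsub : s'.erase i ⊆ s.erase i :=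
            Finset.erase_subset_erase i (Finset.subset_insert i0 s')
          rw [← Pz_Pz hsub (Bt t)]
          exact Finset.card_image_le
        calc b t ^ k = b t ^ (k - 1) * b t := by
              rw [← pow_succ]
              congr 1
              omega
          _ ≤ (∏ i ∈ s', (Pz (s'.erase i) (Bt t)).card) * β :=
              Nat.mul_le_mul hih (f3 t ht)
          _ ≤ (∏ i ∈ s', c i t) * β := by
              refine Nat.mul_le_mul_right _ ?_
              exact Finset.prod_le_prod (fun i _ => Nat.zero_le _) f5
          _ = β * ∏ i ∈ s', c i t := mul_comm _ _
      have hio : ∀ i ∈ s', i0 ∈ s.erase i := by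
        intro i hi
        refine Finset.mem_erase.mpr ⟨fun h => hi0 (h ▸ hi), Finset.mem_insert_self i0 s'⟩
      have ecoord : ∀ i ∈ s', ∀ t : ℤ, ∀ y ∈ Pz (s.erase i) (Bt t), y i0 = t := by
        intro i hi t y hy
        obtain ⟨x, hx, rfl⟩ := Finset.mem_image.mp hy
        show (if i0 ∈ s.erase i then x i0 else 0) = t
        rw [if_pos (hio i hi)]
        exact (Finset.mem_filter.mp hx).2
      have f7 : ∀ i ∈ s', (∑ t ∈ T, c i t) ≤ (Pz (s.erase i) A).card := by
        intro i hi
        have hdisj : ∀ t1 ∈ T, ∀ t2 ∈ T, t1 ≠ t2 →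
            Disjoint (Pz (s.erase i) (Bt t1)) (Pz (s.erase i) (Bt t2)) := by
          intro t1 _ t2 _ hne
          refine Finset.disjoint_left.mpr fun y hy1 hy2 => hne ?_
          rw [← ecoord i hi t1 y hy1, ← ecoord i hi t2 y hy2]
        calc ∑ t ∈ T, c i t = (T.biUnion (fun t => Pz (s.erase i) (Bt t))).card :=
              (Finset.card_biUnion hdisj).symm
          _ ≤ (Pz (s.erase i) A).card := by
              refine Finset.card_le_card (Finset.biUnion_subset.mpr fun t _ => ?_)
              calc Pz (s.erase i) (Bt t) ⊆ Pz (s.erase i) B :=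
                    Pz_mono (Finset.filter_subset _ _)
                _ = Pz (s.erase i) A := Pz_Pz (Finset.erase_subset i s) A
      have hcast : (∑ t ∈ T, b t) ^ k ≤ β * ∏ i ∈ s', (∑ t ∈ T, c i t) := by
        have hh := EIPaux_holder T s' hs'ne (β : ℝ≥0) (fun t => (b t : ℝ≥0))
          (fun i t => (c i t : ℝ≥0)) (by
            intro t ht
            show ((b t : ℝ≥0)) ^ s'.card ≤ (β : ℝ≥0) * ∏ i ∈ s', (c i t : ℝ≥0)
            rw [← hk]
            exact_mod_cast f6 t ht)
        rw [← hk] at hh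
        exact_mod_cast hh
      rw [hcard, hsdef, Finset.prod_insert hi0, Finset.erase_insert hi0, ← hsdef, ← hβ]
      rw [f1]
      calc (∑ t ∈ T, b t) ^ k ≤ β * ∏ i ∈ s', (∑ t ∈ T, c i t) := hcast
        _ ≤ β * ∏ i ∈ s', (Pz (s.erase i) A).card := by
            refine Nat.mul_le_mul_left _ ?_
            exact Finset.prod_le_prod (fun i _ => Nat.zero_le _) f7


/-- recover direction and sign from an adjacent pair written in update form -/
theorem EIPaux_update_eq {d : ℕ} {x : Fin d → ℤ} {i i' : Fin d} {e e' : ℤ} (he : e ≠ 0)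
    (h : Function.update x i (x i + e) = Function.update x i' (x i' + e')) :
    i = i' ∧ e = e' := by
  by_cases hii : i = i'
  · subst hii
    have := congrFun h i
    simp only [Function.update_self] at this
    exact ⟨rfl, by omega⟩
  · have := congrFun h i
    rw [Function.update_self, Function.update_of_ne hii] at this
    omega

/-- adjacency of `x` and `update x i (x i + e)` for `e = ±1`. -/
theorem EIPaux_adj_update {d : ℕ} (x : Fin d → ℤ) (i : Fin d) {e : ℤ}
    (he : e = 1 ∨ e = -1) : adj x (Function.update x i (x i + e)) := by
  rw [adj_iff]
  refine ⟨i, fun j hj => ?_, ?_⟩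
  · rw [Function.update_of_ne hj]
  · rw [Function.update_self]
    omega

/-- The fiber of the projection forgetting coordinate `i`. -/
def EIPfib {d : ℕ} (F : Finset (Fin d → ℤ)) (i : Fin d) (p : Fin d → ℤ) :
    Finset ℤ := (F.filter (fun x => Function.update x i 0 = p)).image (fun x => x i)

/-- Extremal coordinate value in the fiber. -/
noncomputable def EIPval {d : ℕ} (F : Finset (Fin d → ℤ)) (i : Fin d) (bb : Bool)
    (p : Fin d → ℤ) : ℤ :=
  if h : (EIPfib F i p).Nonempty then
    (if bb then (EIPfib F i p).max' h else (EIPfib F i p).min' h) else 0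

noncomputable def EIPpt {d : ℕ} (F : Finset (Fin d → ℤ)) (i : Fin d) (bb : Bool)
    (p : Fin d → ℤ) : (Fin d → ℤ) × (Fin d → ℤ) :=
  (Function.update p i (EIPval F i bb p),
   Function.update p i (EIPval F i bb p + (if bb then 1 else -1)))

theorem EIPaux_lower {d : ℕ} (C : Set (Fin d → ℤ)) (hC : C.Finite)
    (hB : (edgeBoundary C).Finite) :
    2 * ∑ i, ((hC.toFinset.image (fun x => Function.update x i 0)).card) ≤ thetaCard C := by
  classical
  set F := hC.toFinset with hF
  set proj : Fin d → Finset (Fin d → ℤ) := fun i => F.image (fun x => Function.update x i 0)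
    with hproj
  -- basic facts about members of proj i
  have hp0 : ∀ i, ∀ p ∈ proj i, p i = 0 := by
    intro i p hp
    obtain ⟨x, _, rfl⟩ := Finset.mem_image.mp hp
    simp
  have hfibne : ∀ i, ∀ p ∈ proj i, (EIPfib F i p).Nonempty := by
    intro i p hp
    obtain ⟨x, hx, rfl⟩ := Finset.mem_image.mp hp
    exact ⟨x i, Finset.mem_image.mpr ⟨x, Finset.mem_filter.mpr ⟨hx, rfl⟩, rfl⟩⟩
  have hvalmem : ∀ i bb, ∀ p ∈ proj i, EIPval F i bb p ∈ EIPfib F i p := by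
    intro i bb p hp
    rw [EIPval, dif_pos (hfibne i p hp)]
    cases bb
    · simpa using Finset.min'_mem _ (hfibne i p hp)
    · simpa using Finset.max'_mem _ (hfibne i p hp)
  have hvalext : ∀ (i : Fin d) (bb : Bool), ∀ p ∈ proj i, ∀ t ∈ EIPfib F i p,
      (if bb then t ≤ EIPval F i bb p else EIPval F i bb p ≤ t) := by
    intro i bb p hp t ht
    rw [EIPval, dif_pos (hfibne i p hp)]
    cases bb
    · simpa using Finset.min'_le _ t ht
    · simpa using Finset.le_max' _ t ht
  -- points of the fiber are updates of p
  have hfibpt : ∀ i, ∀ p, ∀ t ∈ EIPfib F i p, Function.update p i t ∈ F := by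
    intro i p t ht
    obtain ⟨x, hx, rfl⟩ := Finset.mem_image.mp ht
    obtain ⟨hxF, hxp⟩ := Finset.mem_filter.mp hx
    have : Function.update p i (x i) = x := by
      funext j
      by_cases hj : j = i
      · subst hj; simp
      · rw [Function.update_of_ne hj, ← hxp, Function.update_of_ne hj]
    rwa [this]
  -- the first point is in C, the second is not
  have hmem1 : ∀ i bb, ∀ p ∈ proj i, (EIPpt F i bb p).1 ∈ C := by
    intro i bb p hp
    have := hfibpt i p _ (hvalmem i bb p hp)
    rw [hF, Set.Finite.mem_toFinset] at this
    exact this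
  have hmem2 : ∀ i bb, ∀ p ∈ proj i, (EIPpt F i bb p).2 ∉ C := by
    intro i bb p hp
    intro hcon
    have hconF : Function.update p i (EIPval F i bb p + (if bb then 1 else -1)) ∈ F := by
      rw [hF, Set.Finite.mem_toFinset]; exact hcon
    have hfib : EIPval F i bb p + (if bb then 1 else -1) ∈ EIPfib F i p := by
      refine Finset.mem_image.mpr ⟨_, Finset.mem_filter.mpr ⟨hconF, ?_⟩, by simp⟩
      funext j
      by_cases hj : j = i
      · subst hj; simp [hp0 _ p hp]
      · rw [Function.update_of_ne hj, Function.update_of_ne hj]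
    have := hvalext i bb p hp _ hfib
    cases bb <;> simp at this <;> omega
  -- injectivity on proj i
  have hinj : ∀ i bb, Set.InjOn (EIPpt F i bb) (proj i) := by
    intro i bb p hp q hq hpq
    have h1 := congrArg Prod.fst hpq
    have : ∀ r ∈ proj i, Function.update (Function.update r i (EIPval F i bb r)) i 0 = r := by
      intro r hr
      funext j
      by_cases hj : j = i
      · subst hj; simp [hp0 _ r hr]
      · simp [Function.update_of_ne hj]
    rw [← this p hp, ← this q hq]
    exact congrArg (fun z => Function.update z i 0) h1
  -- the boundary finset
  set D : Finset ((Fin d → ℤ) × (Fin d → ℤ)) :=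
    (Finset.univ : Finset (Fin d × Bool)).biUnion
      (fun q => (proj q.1).image (EIPpt F q.1 q.2)) with hD
  have hsnd : ∀ (i : Fin d) (bb : Bool) (p : Fin d → ℤ), (EIPpt F i bb p).2 =
      Function.update (EIPpt F i bb p).1 i
        ((EIPpt F i bb p).1 i + (if bb then 1 else -1)) := by
    intro i bb p
    show Function.update p i (EIPval F i bb p + (if bb then 1 else -1)) = _
    funext j
    by_cases hj : j = i
    · subst hj; simp [EIPpt]
    · simp [EIPpt, Function.update_of_ne hj]
  set D : Finset ((Fin d → ℤ) × (Fin d → ℤ)) :=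
    (Finset.univ : Finset (Fin d × Bool)).biUnion
      (fun q => (proj q.1).image (EIPpt F q.1 q.2)) with hD
  have hDsub : ∀ y ∈ D, y ∈ edgeBoundary C := by
    intro y hy
    obtain ⟨q, _, hy2⟩ := Finset.mem_biUnion.mp hy
    obtain ⟨p, hp, rfl⟩ := Finset.mem_image.mp hy2
    refine ⟨hmem1 q.1 q.2 p hp, hmem2 q.1 q.2 p hp, ?_⟩
    rw [show (EIPpt F q.1 q.2 p).2 = _ from hsnd q.1 q.2 p]
    exact EIPaux_adj_update _ _ (by cases hq2 : q.2 <;> simp)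
  have hdisj : ∀ q1 ∈ (Finset.univ : Finset (Fin d × Bool)), ∀ q2 ∈ Finset.univ, q1 ≠ q2 →
      Disjoint ((proj q1.1).image (EIPpt F q1.1 q1.2))
        ((proj q2.1).image (EIPpt F q2.1 q2.2)) := by
    intro q1 _ q2 _ hne
    refine Finset.disjoint_left.mpr fun y hy1 hy2 => hne ?_
    obtain ⟨p1, hp1, h1⟩ := Finset.mem_image.mp hy1
    obtain ⟨p2, hp2, h2⟩ := Finset.mem_image.mp hy2
    have e1 := hsnd q1.1 q1.2 p1
    have e2 := hsnd q2.1 q2.2 p2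
    rw [h1] at e1
    rw [h2] at e2
    have heq : Function.update y.1 q1.1 (y.1 q1.1 + (if q1.2 then 1 else -1)) =
        Function.update y.1 q2.1 (y.1 q2.1 + (if q2.2 then 1 else -1)) := by
      rw [← e1, ← e2]
    have hupd := EIPaux_update_eq (x := y.1)
      (by cases hq : q1.2 <;> simp : (if q1.2 then (1:ℤ) else -1) ≠ 0) heq
    have hb : q1.2 = q2.2 := by
      rcases hupd with ⟨-, hee⟩
      cases hq1 : q1.2 <;> cases hq2 : q2.2 <;> simp [hq1, hq2] at hee ⊢
    exact Prod.ext hupd.1 hb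
  have hcard : D.card = 2 * ∑ i, (proj i).card := by
    rw [hD, Finset.card_biUnion hdisj]
    rw [Finset.sum_congr rfl
      (fun (q : Fin d × Bool) _ => Finset.card_image_of_injOn (hinj q.1 q.2))]
    calc ∑ q : Fin d × Bool, (proj q.1).card
        = ∑ i, ∑ _b : Bool, (proj i).card := Fintype.sum_prod_type _
      _ = ∑ i, 2 * (proj i).card := by
          refine Finset.sum_congr rfl fun i _ => ?_
          simp [two_mul]
      _ = 2 * ∑ i, (proj i).card := by rw [Finset.mul_sum]
  rw [← hcard]
  rw [thetaCard, ← Set.ncard_coe_finset]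
  exact Set.ncard_le_ncard (fun y hy => hDsub y (Finset.mem_coe.mp hy)) hB

/-- the edge boundary of a finite set is finite -/
theorem EIPaux_eb_finite {d : ℕ} {C : Set (Fin d → ℤ)} (hC : C.Finite) :
    (edgeBoundary C).Finite := by
  have hsub : edgeBoundary C ⊆ ⋃ q : Fin d × Bool,
      (fun x => (x, Function.update x q.1 (x q.1 + (if q.2 then 1 else -1)))) '' C := by
    rintro ⟨x, y⟩ ⟨hx, hy, hadj⟩
    dsimp only at hx hy hadj
    obtain ⟨i, hoff, he⟩ := adj_iff.mp hadj
    have hyupd : ∀ e : ℤ, x i - y i = -e → Function.update x i (x i + e) = y := by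
      intro e hee
      funext j
      by_cases hj : j = i
      · subst hj; rw [Function.update_self]; omega
      · rw [Function.update_of_ne hj, hoff j hj]
    rcases he with h1 | h1
    · exact Set.mem_iUnion.mpr ⟨(i, false), x, hx,
        Prod.ext_iff.mpr ⟨rfl, hyupd (-1) (by omega)⟩⟩
    · exact Set.mem_iUnion.mpr ⟨(i, true), x, hx,
        Prod.ext_iff.mpr ⟨rfl, hyupd 1 (by omega)⟩⟩
  exact Set.Finite.subset (Set.finite_iUnion fun q => hC.image _) hsub

/-- A face of the cube. -/
noncomputable def EIPface (d ℓ : ℕ) (i : Fin d) (bb : Bool) : Finset (Fin d → ℤ) :=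
  Finset.Icc (Function.update (fun _ => (1:ℤ)) i (if bb then (ℓ:ℤ) else 1))
    (Function.update (fun _ => (ℓ:ℤ)) i (if bb then (ℓ:ℤ) else 1))

theorem EIPface_card {d ℓ : ℕ} (hℓ : 1 ≤ ℓ) (i : Fin d) (bb : Bool) :
    (EIPface d ℓ i bb).card = ℓ ^ (d - 1) := by
  rw [EIPface, Pi.card_Icc]
  have h1 : ∀ j : Fin d, (Finset.Icc (Function.update (fun _ => (1:ℤ)) i
      (if bb then (ℓ:ℤ) else 1) j) (Function.update (fun _ => (ℓ:ℤ)) i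
      (if bb then (ℓ:ℤ) else 1) j)).card = if j = i then 1 else ℓ := by
    intro j
    by_cases hj : j = i
    · subst hj
      cases bb <;> simp [Int.card_Icc]
    · simp only [Function.update_of_ne hj, Int.card_Icc, if_neg hj]
      omega
  rw [Finset.prod_congr rfl (fun j _ => h1 j)]
  rw [← Finset.mul_prod_erase Finset.univ _ (Finset.mem_univ i), if_pos rfl, one_mul]
  rw [Finset.prod_congr rfl (fun j hj => if_neg (Finset.mem_erase.mp hj).1),
    Finset.prod_const, Finset.card_erase_of_mem (Finset.mem_univ i), Finset.card_univ,
    Fintype.card_fin]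

theorem EIPaux_cube_theta {d ℓ : ℕ} (hd : 1 ≤ d) (hℓ : 1 ≤ ℓ) :
    thetaCard {x : Fin d → ℤ | ∀ i, 1 ≤ x i ∧ x i ≤ (ℓ : ℤ)} = 2 * d * ℓ ^ (d - 1) := by
  classical
  set Q : Set (Fin d → ℤ) := {x : Fin d → ℤ | ∀ i, 1 ≤ x i ∧ x i ≤ (ℓ : ℤ)} with hQ
  set G : Fin d → Bool → (Fin d → ℤ) → (Fin d → ℤ) × (Fin d → ℤ) :=
    fun i bb x => (x, Function.update x i (x i + (if bb then 1 else -1))) with hG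
  set Bd : Finset ((Fin d → ℤ) × (Fin d → ℤ)) :=
    (Finset.univ : Finset (Fin d × Bool)).biUnion
      (fun q => (EIPface d ℓ q.1 q.2).image (G q.1 q.2)) with hBd
  have hface_mem : ∀ (i : Fin d) (bb : Bool) (x : Fin d → ℤ), x ∈ EIPface d ℓ i bb ↔
      ((∀ j, j ≠ i → 1 ≤ x j ∧ x j ≤ (ℓ:ℤ)) ∧ x i = (if bb then (ℓ:ℤ) else 1)) := by
    intro i bb x
    rw [EIPface, Finset.mem_Icc, Pi.le_def, Pi.le_def]
    constructor
    · rintro ⟨hlo, hhi⟩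
      refine ⟨fun j hj => ?_, ?_⟩
      · have h1 := hlo j; have h2 := hhi j
        rw [Function.update_of_ne hj] at h1 h2
        exact ⟨h1, h2⟩
      · have h1 := hlo i; have h2 := hhi i
        rw [Function.update_self] at h1 h2
        omega
    · rintro ⟨hoff, hi⟩
      constructor <;> intro j <;> by_cases hj : j = i
      · subst hj; rw [Function.update_self]; omega
      · rw [Function.update_of_ne hj]; exact (hoff j hj).1
      · subst hj; rw [Function.update_self]; omega
      · rw [Function.update_of_ne hj]; exact (hoff j hj).2
  have hset : ∀ y, y ∈ Bd ↔ y ∈ edgeBoundary Q := by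
    intro y
    rw [hBd, Finset.mem_biUnion]
    constructor
    · rintro ⟨q, -, hq⟩
      obtain ⟨x, hx, rfl⟩ := Finset.mem_image.mp hq
      obtain ⟨hoff, hxi⟩ := (hface_mem q.1 q.2 x).mp hx
      have hxQ : x ∈ Q := by
        intro j
        by_cases hj : j = q.1
        · subst hj
          rw [hxi]
          cases q.2 <;> simp <;> try omega
        · exact hoff j hj
      refine ⟨hxQ, ?_, EIPaux_adj_update x q.1 (by cases q.2 <;> simp)⟩
      intro hcon
      have hthis := hcon q.1
      show False
      rw [show ((G q.1 q.2 x).2 q.1) = x q.1 + (if q.2 then 1 else -1) from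
        Function.update_self _ _ _, hxi] at hthis
      cases hq2 : q.2 <;> rw [hq2] at hthis <;> simp at hthis <;> try omega
    · rintro ⟨hy1, hy2, hadj⟩
      obtain ⟨i, hoff, he⟩ := adj_iff.mp hadj
      have hfail : ¬ (1 ≤ y.2 i ∧ y.2 i ≤ (ℓ:ℤ)) := by
        intro hcon
        exact hy2 (fun j => by
          by_cases hj : j = i
          · subst hj; exact hcon
          · rw [← hoff j hj]; exact hy1 j)
      have hb := hy1 i
      have hyupd : ∀ v : ℤ, y.2 i = v → Function.update y.1 i v = y.2 := by
        intro v hv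
        funext j
        by_cases hj : j = i
        · subst hj; rw [Function.update_self, hv]
        · rw [Function.update_of_ne hj, hoff j hj]
      rcases he with h1 | h1
      · have hy2i : y.2 i = 0 := by
          rcases not_and_or.mp hfail with hcc | hcc <;> omega
        refine ⟨(i, false), Finset.mem_univ _, Finset.mem_image.mpr ⟨y.1, ?_, ?_⟩⟩
        · refine (hface_mem i false y.1).mpr ⟨fun j hj => hy1 j, ?_⟩
          rw [show (if (false:Bool) then (ℓ:ℤ) else 1) = 1 from rfl]
          omega
        · refine Prod.ext_iff.mpr ⟨rfl, ?_⟩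
          show Function.update y.1 i (y.1 i + (if (false : Bool) then 1 else -1)) = y.2
          rw [show (if (false : Bool) then (1:ℤ) else -1) = -1 by simp]
          exact hyupd (y.1 i + (-1)) (by omega)
      · have hy2i : y.2 i = (ℓ:ℤ) + 1 := by
          rcases not_and_or.mp hfail with hcc | hcc <;> omega
        refine ⟨(i, true), Finset.mem_univ _, Finset.mem_image.mpr ⟨y.1, ?_, ?_⟩⟩
        · refine (hface_mem i true y.1).mpr ⟨fun j hj => hy1 j, ?_⟩
          rw [show (if (true:Bool) then (ℓ:ℤ) else 1) = (ℓ:ℤ) from rfl]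
          omega
        · refine Prod.ext_iff.mpr ⟨rfl, ?_⟩
          show Function.update y.1 i (y.1 i + (if (true : Bool) then 1 else -1)) = y.2
          rw [show (if (true : Bool) then (1:ℤ) else -1) = 1 by simp]
          exact hyupd (y.1 i + 1) (by omega)
  have hdisj : ∀ q1 ∈ (Finset.univ : Finset (Fin d × Bool)), ∀ q2 ∈ Finset.univ, q1 ≠ q2 →
      Disjoint ((EIPface d ℓ q1.1 q1.2).image (G q1.1 q1.2))
        ((EIPface d ℓ q2.1 q2.2).image (G q2.1 q2.2)) := by
    intro q1 _ q2 _ hne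
    refine Finset.disjoint_left.mpr fun y hy1 hy2 => hne ?_
    obtain ⟨x1, _, h1⟩ := Finset.mem_image.mp hy1
    obtain ⟨x2, _, h2⟩ := Finset.mem_image.mp hy2
    have hx12 : x1 = x2 := congrArg Prod.fst (h1.trans h2.symm)
    subst hx12
    have heq : Function.update x1 q1.1 (x1 q1.1 + (if q1.2 then 1 else -1)) =
        Function.update x1 q2.1 (x1 q2.1 + (if q2.2 then 1 else -1)) :=
      congrArg Prod.snd (h1.trans h2.symm)
    have hupd := EIPaux_update_eq (x := x1)
      (by cases hq : q1.2 <;> simp : (if q1.2 then (1:ℤ) else -1) ≠ 0) heq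
    have hbb : q1.2 = q2.2 := by
      rcases hupd with ⟨-, hee⟩
      cases hq1 : q1.2 <;> cases hq2 : q2.2 <;> rw [hq1, hq2] at hee <;> simp at hee ⊢
    exact Prod.ext_iff.mpr ⟨hupd.1, hbb⟩
  have hinj : ∀ (i : Fin d) (bb : Bool), Set.InjOn (G i bb) (EIPface d ℓ i bb) := by
    intro i bb x _ y _ hxy
    exact congrArg Prod.fst hxy
  have hcard : Bd.card = 2 * d * ℓ ^ (d - 1) := by
    rw [hBd, Finset.card_biUnion hdisj]
    rw [Finset.sum_congr rfl
      (fun (q : Fin d × Bool) _ => Finset.card_image_of_injOn (hinj q.1 q.2))]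
    rw [Finset.sum_congr rfl (fun (q : Fin d × Bool) _ => EIPface_card hℓ q.1 q.2)]
    rw [Finset.sum_const, Finset.card_univ, Fintype.card_prod, Fintype.card_fin,
      Fintype.card_bool, smul_eq_mul]
    ring
  have hcoe : (↑Bd : Set ((Fin d → ℤ) × (Fin d → ℤ))) = edgeBoundary Q :=
    Set.ext fun y => by rw [Finset.mem_coe]; exact hset y
  rw [thetaCard, ← hcoe, Set.ncard_coe_finset, hcard]

theorem EIPaux_cube_card {d ℓ : ℕ} (hℓ : 1 ≤ ℓ) :
    ({x : Fin d → ℤ | ∀ i, 1 ≤ x i ∧ x i ≤ (ℓ:ℤ)} : Set (Fin d → ℤ)).Finite ∧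
    ({x : Fin d → ℤ | ∀ i, 1 ≤ x i ∧ x i ≤ (ℓ:ℤ)} : Set (Fin d → ℤ)).ncard = ℓ ^ d := by
  have hQ : {x : Fin d → ℤ | ∀ i, 1 ≤ x i ∧ x i ≤ (ℓ:ℤ)} =
      ↑(Finset.Icc (fun _ : Fin d => (1:ℤ)) (fun _ => (ℓ:ℤ))) := by
    ext x
    simp only [Set.mem_setOf_eq, Finset.coe_Icc, Set.mem_Icc, Pi.le_def]
    constructor
    · intro h; exact ⟨fun i => (h i).1, fun i => (h i).2⟩
    · intro h i; exact ⟨h.1 i, h.2 i⟩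
  rw [hQ]
  refine ⟨(Finset.Icc (fun _ => (1:ℤ)) (fun _ : Fin d => (ℓ:ℤ))).finite_toSet, ?_⟩
  rw [Set.ncard_coe_finset, Pi.card_Icc]
  have h1 : ∀ j : Fin d, (Finset.Icc ((fun _ => (1:ℤ)) j) ((fun _ => (ℓ:ℤ)) j)).card = ℓ := by
    intro j
    show (Finset.Icc (1:ℤ) (ℓ:ℤ)).card = ℓ
    rw [Int.card_Icc]
    omega
  rw [Finset.prod_congr rfl (fun j _ => h1 j), Finset.prod_const, Finset.card_univ,
    Fintype.card_fin]

theorem EIPaux_main_lower {d ℓ : ℕ} (hd : 1 ≤ d) (hℓ : 1 ≤ ℓ) (C : Set (Fin d → ℤ))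
    (hC : C.Finite) (hcard : C.ncard = ℓ ^ d) : 2 * d * ℓ ^ (d - 1) ≤ thetaCard C := by
  classical
  set F := hC.toFinset with hF
  have hFcard : F.card = ℓ ^ d := by
    rw [hF, ← Set.ncard_eq_toFinset_card C hC]
    exact hcard
  have hFne : F.Nonempty := Finset.card_pos.mp (by rw [hFcard]; positivity)
  set a : Fin d → ℕ := fun i => (F.image (fun x => Function.update x i 0)).card with ha
  have hLW : F.card ^ (d - 1) ≤ ∏ i, a i := by
    have h := EIPaux_LW Finset.univ F hFne
    have h1 : Pz Finset.univ F = F := by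
      rw [Pz, show (fun (x : Fin d → ℤ) (j : Fin d) =>
          if j ∈ Finset.univ then x j else 0) = id from by funext x j; simp]
      exact Finset.image_id
    have h2 : ∀ i, Pz (Finset.univ.erase i) F = F.image (fun x => Function.update x i 0) := by
      intro i
      rw [Pz]
      refine Finset.image_congr fun x _ => ?_
      funext j
      by_cases hj : j = i
      · subst hj; simp
      · simp [Finset.mem_erase, hj, Function.update_of_ne hj]
    rw [h1, Finset.card_univ, Fintype.card_fin] at h
    calc F.card ^ (d - 1) ≤ ∏ i, (Pz (Finset.univ.erase i) F).card := h
      _ = ∏ i, a i := Finset.prod_congr rfl fun i _ => by rw [h2 i]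
  have hne : Nonempty (Fin d) := ⟨⟨0, hd⟩⟩
  have hdd : ((d : ℝ≥0)) ≠ 0 := by positivity
  have hsum : d * ℓ ^ (d - 1) ≤ ∑ i, a i := by
    have hg := EIPaux_geom_le (Finset.univ : Finset (Fin d)) Finset.univ_nonempty
      (fun i => (a i : ℝ≥0))
    rw [Finset.card_univ, Fintype.card_fin] at hg
    have hL : ((ℓ:ℝ≥0) ^ (d - 1)) ^ d ≤ ((∑ i, (a i : ℝ≥0)) / d) ^ d := by
      calc ((ℓ:ℝ≥0) ^ (d - 1)) ^ d = ((ℓ:ℝ≥0) ^ d) ^ (d - 1) := by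
            rw [← pow_mul, ← pow_mul, Nat.mul_comm]
        _ ≤ ∏ i, (a i : ℝ≥0) := by
            have : ((ℓ:ℝ≥0) ^ d) ^ (d-1) = ((F.card : ℕ) : ℝ≥0) ^ (d-1) := by
              rw [hFcard]; push_cast; ring
            rw [this]
            exact_mod_cast hLW
        _ ≤ ((∑ i, (a i : ℝ≥0)) / d) ^ d := hg
    have hroot : (ℓ:ℝ≥0) ^ (d - 1) ≤ (∑ i, (a i : ℝ≥0)) / d :=
      le_of_pow_le_pow_left₀ (by omega) (zero_le) hL
    have hmul : (d : ℝ≥0) * ((ℓ:ℝ≥0) ^ (d - 1)) ≤ ∑ i, (a i : ℝ≥0) := by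
      calc (d : ℝ≥0) * ((ℓ:ℝ≥0) ^ (d - 1)) ≤ (d : ℝ≥0) * ((∑ i, (a i : ℝ≥0)) / d) :=
            mul_le_mul_right hroot _
        _ = ∑ i, (a i : ℝ≥0) := by rw [mul_comm, div_mul_cancel₀ _ hdd]
    exact_mod_cast hmul
  have hlow := EIPaux_lower C hC (EIPaux_eb_finite hC)
  calc 2 * d * ℓ ^ (d - 1) = 2 * (d * ℓ ^ (d - 1)) := by ring
    _ ≤ 2 * ∑ i, a i := Nat.mul_le_mul_left 2 hsum
    _ ≤ thetaCard C := hlow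

/-- if `n = ℓ^d` then every `EIP^d` minimizer of cardinality `n`
has edge perimeter at least `2d·n^{(d-1)/d} = 2d·ℓ^{d-1}`, with equality for
the cube `{1,…,ℓ}^d`; in particular `EIP^d(ℓ^d) = 2d·ℓ^{d-1}`. -/
theorem EIP_cube_value (d ℓ : ℕ) (hd : 1 ≤ d) (hℓ : 1 ≤ ℓ) :
    (∀ C : Set (Fin d → ℤ), C.Finite → C.ncard = ℓ ^ d →
      thetaCard C = EIP d (ℓ ^ d) → 2 * d * ℓ ^ (d - 1) ≤ thetaCard C) ∧
    thetaCard {x : Fin d → ℤ | ∀ i, 1 ≤ x i ∧ x i ≤ (ℓ : ℤ)} = 2 * d * ℓ ^ (d - 1) ∧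
    EIP d (ℓ ^ d) = 2 * d * ℓ ^ (d - 1) := by
  obtain ⟨hQfin, hQcard⟩ := EIPaux_cube_card (d := d) hℓ
  have hmem : 2 * d * ℓ ^ (d - 1) ∈
      {m | ∃ C : Set (Fin d → ℤ), C.Finite ∧ C.ncard = ℓ ^ d ∧ thetaCard C = m} :=
    ⟨{x : Fin d → ℤ | ∀ i, 1 ≤ x i ∧ x i ≤ (ℓ : ℤ)}, hQfin, hQcard,
      EIPaux_cube_theta hd hℓ⟩
  have hEIP : EIP d (ℓ ^ d) = 2 * d * ℓ ^ (d - 1) := by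
    refine le_antisymm (Nat.sInf_le hmem) (le_csInf ⟨_, hmem⟩ ?_)
    rintro m ⟨C, hCfin, hCcard, rfl⟩
    exact EIPaux_main_lower hd hℓ C hCfin hCcard
  exact ⟨fun C hCfin hCcard _ => EIPaux_main_lower hd hℓ C hCfin hCcard,
    EIPaux_cube_theta hd hℓ, hEIP⟩
end

section
/- For every ℓ ∈ ℕ and every p ∈ ℕ with p ≤ ⌊√ℓ⌋, the rectangle P = {1,…,ℓ−p} × {1,…,ℓ} ⊂ ℤ^2 is an edge-isoperimetric minimizer in ℤ^2, i.e., #Θ_2(P) = EIP^2(ℓ(ℓ−p)). -/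
lemma adj_iff_s11 (x y : Fin 2 → ℤ) : adj x y ↔
    (x 1 = y 1 ∧ (y 0 = x 0 + 1 ∨ x 0 = y 0 + 1)) ∨
    (x 0 = y 0 ∧ (y 1 = x 1 + 1 ∨ x 1 = y 1 + 1)) := by
  unfold adj
  rw [Fin.sum_univ_two]
  constructor
  · intro h
    have h0 : -1 ≤ x 0 - y 0 ∧ x 0 - y 0 ≤ 1 :=
      ⟨by nlinarith [sq_nonneg (x 1 - y 1), sq_nonneg (x 0 - y 0 + 1)],
       by nlinarith [sq_nonneg (x 1 - y 1), sq_nonneg (x 0 - y 0 - 1)]⟩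
    have h1 : -1 ≤ x 1 - y 1 ∧ x 1 - y 1 ≤ 1 :=
      ⟨by nlinarith [sq_nonneg (x 0 - y 0), sq_nonneg (x 1 - y 1 + 1)],
       by nlinarith [sq_nonneg (x 0 - y 0), sq_nonneg (x 1 - y 1 - 1)]⟩
    have ha : x 0 - y 0 = -1 ∨ x 0 - y 0 = 0 ∨ x 0 - y 0 = 1 := by omega
    rcases ha with ha | ha | ha
    · have hb : (x 1 - y 1) ^ 2 = 0 := by nlinarith
      have hb' : x 1 - y 1 = 0 := by
        have := pow_eq_zero_iff (n := 2) (by norm_num) |>.1 hb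
        omega
      left; exact ⟨by omega, Or.inl (by omega)⟩
    · right; refine ⟨by omega, ?_⟩
      have hb : (x 1 - y 1) ^ 2 = 1 := by nlinarith
      have : (x 1 - y 1 - 1) * (x 1 - y 1 + 1) = 0 := by linear_combination hb
      rcases mul_eq_zero.1 this with h' | h'
      · right; omega
      · left; omega
    · have hb : (x 1 - y 1) ^ 2 = 0 := by nlinarith
      have hb' : x 1 - y 1 = 0 := by
        have := pow_eq_zero_iff (n := 2) (by norm_num) |>.1 hb
        omega
      left; exact ⟨by omega, Or.inr (by omega)⟩
  · rintro (⟨h1, h0 | h0⟩ | ⟨h0, h1 | h1⟩) <;>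
      rw [h1] <;> try rw [h0]
    all_goals ring


lemma eta2 (x : Fin 2 → ℤ) : x = ![x 0, x 1] := by
  funext i; fin_cases i <;> rfl

lemma edgeBoundary_finite {C : Set (Fin 2 → ℤ)} (hC : C.Finite) :
    (edgeBoundary C).Finite := by
  have hsub : edgeBoundary C ⊆
      ⋃ x ∈ C, ({x} ×ˢ ({![x 0 + 1, x 1], ![x 0 - 1, x 1], ![x 0, x 1 + 1], ![x 0, x 1 - 1]}
        : Set (Fin 2 → ℤ))) := by
    rintro ⟨u, v⟩ ⟨hu, hv, hadj⟩
    refine Set.mem_biUnion hu ?_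
    have hvmem : v ∈ ({![u 0 + 1, u 1], ![u 0 - 1, u 1], ![u 0, u 1 + 1], ![u 0, u 1 - 1]}
        : Set (Fin 2 → ℤ)) := by
      rcases (adj_iff_s11 u v).1 hadj with ⟨h1, h0 | h0⟩ | ⟨h0, h1 | h1⟩
      · left; funext i; fin_cases i <;> simp <;> omega
      · right; left; funext i; fin_cases i <;> simp <;> omega
      · right; right; left; funext i; fin_cases i <;> simp <;> omega
      · right; right; right; funext i; fin_cases i <;> simp <;> omega
    exact Set.mem_prod.2 ⟨rfl, hvmem⟩
  exact Set.Finite.subset (Set.Finite.biUnion hC (fun x _ =>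
    (Set.finite_singleton x).prod (Set.toFinite _))) hsub

lemma projection_bound (C : Set (Fin 2 → ℤ)) (hC : C.Finite) (hne : C.Nonempty) :
    ∃ a b : ℕ, 1 ≤ a ∧ 1 ≤ b ∧ C.ncard ≤ a * b ∧ 2 * a + 2 * b ≤ thetaCard C := by
  classical
  set F : Finset (Fin 2 → ℤ) := hC.toFinset with hF
  have hmemF : ∀ x, x ∈ F ↔ x ∈ C := fun x => hC.mem_toFinset
  have hFne : F.Nonempty := by
    obtain ⟨x, hx⟩ := hne; exact ⟨x, (hmemF x).2 hx⟩
  set cols : Finset ℤ := F.image (fun x => x 0) with hcols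
  set rows : Finset ℤ := F.image (fun x => x 1) with hrows
  refine ⟨cols.card, rows.card, Finset.card_pos.2 (hFne.image _),
    Finset.card_pos.2 (hFne.image _), ?_, ?_⟩
  · -- cardinality bound
    have h1 : C.ncard = F.card := Set.ncard_eq_toFinset_card _ hC
    rw [h1, ← Finset.card_product]
    refine Finset.card_le_card_of_injOn (fun x => (x 0, x 1)) ?_ ?_
    · intro x hx
      exact Finset.mem_product.2 ⟨Finset.mem_image_of_mem _ hx, Finset.mem_image_of_mem _ hx⟩
    · intro x _ y _ hxy
      have h0 : x 0 = y 0 := congrArg Prod.fst hxy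
      have h1' : x 1 = y 1 := congrArg Prod.snd hxy
      funext i; fin_cases i <;> assumption
  · -- perimeter bound
    set V : Set ((Fin 2 → ℤ) × (Fin 2 → ℤ)) := {p ∈ edgeBoundary C | p.1 0 = p.2 0} with hV
    set H : Set ((Fin 2 → ℤ) × (Fin 2 → ℤ)) := {p ∈ edgeBoundary C | p.1 1 = p.2 1} with hH
    have hEfin := edgeBoundary_finite hC
    have hVfin : V.Finite := hEfin.subset (Set.sep_subset _ _)
    have hHfin : H.Finite := hEfin.subset (Set.sep_subset _ _)
    have hunion : edgeBoundary C = V ∪ H := by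
      ext p
      constructor
      · intro hp
        rcases (adj_iff_s11 p.1 p.2).1 hp.2.2 with ⟨h1, _⟩ | ⟨h0, _⟩
        · right; exact ⟨hp, h1⟩
        · left; exact ⟨hp, h0⟩
      · rintro (h | h) <;> exact h.1
    have hdisj : Disjoint V H := by
      rw [Set.disjoint_left]
      rintro p ⟨hp, h0⟩ ⟨_, h1⟩
      rcases (adj_iff_s11 p.1 p.2).1 hp.2.2 with ⟨_, h | h⟩ | ⟨_, h | h⟩ <;> omega
    have hsplit : thetaCard C = V.ncard + H.ncard := by
      rw [thetaCard, hunion, Set.ncard_union_eq hdisj hVfin hHfin]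
    -- injection into V
    have hVbound : 2 * cols.card ≤ V.ncard := by
      set M : ℤ → ℤ := fun c => ((F.filter (fun x => x 0 = c)).image (fun x => x 1)).max.getD 0
      set m : ℤ → ℤ := fun c => ((F.filter (fun x => x 0 = c)).image (fun x => x 1)).min.getD 0
      have hcolmem : ∀ c t : ℤ,
          t ∈ (F.filter (fun x => x 0 = c)).image (fun x => x 1) ↔ ![c, t] ∈ C := by
        intro c t
        simp only [Finset.mem_image, Finset.mem_filter]
        constructor
        · rintro ⟨x, ⟨hx, hx0⟩, hx1⟩
          have : x = ![c, t] := by rw [eta2 x, hx0, hx1]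
          rwa [← this, ← hmemF]
        · intro h
          exact ⟨![c, t], ⟨(hmemF _).2 h, by simp⟩, by simp⟩
      have hMC : ∀ c ∈ cols, ![c, M c] ∈ C ∧ (∀ t, ![c, t] ∈ C → t ≤ M c) := by
        intro c hc
        obtain ⟨x, hx, hx0⟩ := Finset.mem_image.1 hc
        have hSne : ((F.filter (fun x => x 0 = c)).image (fun x => x 1)).Nonempty :=
          ⟨x 1, Finset.mem_image_of_mem _ (Finset.mem_filter.2 ⟨hx, hx0⟩)⟩
        set S := (F.filter (fun x => x 0 = c)).image (fun x => x 1)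
        have hmax : S.max = ↑(S.max' hSne) := (S.coe_max' hSne).symm
        have hMc : M c = S.max' hSne := by simp only [M]; rw [hmax]; rfl
        constructor
        · rw [← hcolmem, hMc]; exact S.max'_mem hSne
        · intro t ht
          rw [hMc]; exact S.le_max' t ((hcolmem c t).2 ht)
      have hmC : ∀ c ∈ cols, ![c, m c] ∈ C ∧ (∀ t, ![c, t] ∈ C → m c ≤ t) := by
        intro c hc
        obtain ⟨x, hx, hx0⟩ := Finset.mem_image.1 hc
        have hSne : ((F.filter (fun x => x 0 = c)).image (fun x => x 1)).Nonempty :=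
          ⟨x 1, Finset.mem_image_of_mem _ (Finset.mem_filter.2 ⟨hx, hx0⟩)⟩
        set S := (F.filter (fun x => x 0 = c)).image (fun x => x 1)
        have hmin : S.min = ↑(S.min' hSne) := (S.coe_min' hSne).symm
        have hmc : m c = S.min' hSne := by simp only [m]; rw [hmin]; rfl
        constructor
        · rw [← hcolmem, hmc]; exact S.min'_mem hSne
        · intro t ht
          rw [hmc]; exact S.min'_le t ((hcolmem c t).2 ht)
      set Φ : ℤ × Bool → (Fin 2 → ℤ) × (Fin 2 → ℤ) := fun q =>
        if q.2 then (![q.1, M q.1], ![q.1, M q.1 + 1]) else (![q.1, m q.1], ![q.1, m q.1 - 1])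
        with hΦ
      have hadjup : ∀ c t : ℤ, adj ![c, t] ![c, t + 1] := by
        intro c t
        rw [adj_iff_s11]; right
        refine ⟨by simp, Or.inl (by simp)⟩
      have hadjdn : ∀ c t : ℤ, adj ![c, t] ![c, t - 1] := by
        intro c t
        rw [adj_iff_s11]; right
        refine ⟨by simp, Or.inr (by simp)⟩
      have hcard2 : (cols ×ˢ (Finset.univ : Finset Bool)).card = 2 * cols.card := by
        rw [Finset.card_product]; simp [Nat.mul_comm]
      have hΦf : ∀ c : ℤ, Φ (c, false) = (![c, m c], ![c, m c - 1]) := fun c => rfl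
      have hΦt : ∀ c : ℤ, Φ (c, true) = (![c, M c], ![c, M c + 1]) := fun c => rfl
      rw [Set.ncard_eq_toFinset_card _ hVfin, ← hcard2]
      refine Finset.card_le_card_of_injOn Φ ?_ ?_
      · rintro ⟨c, s⟩ hq
        have hc : c ∈ cols := (Finset.mem_product.1 hq).1
        rw [Finset.mem_coe, Set.Finite.mem_toFinset]
        cases s
        · rw [hΦf]
          refine ⟨⟨(hmC c hc).1, ?_, hadjdn c (m c)⟩, by simp⟩
          intro hmem
          have := (hmC c hc).2 (m c - 1) hmem
          omega
        · rw [hΦt]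
          refine ⟨⟨(hMC c hc).1, ?_, hadjup c (M c)⟩, by simp⟩
          intro hmem
          have := (hMC c hc).2 (M c + 1) hmem
          omega
      · rintro ⟨c, s⟩ hq ⟨c', s'⟩ hq' heq
        cases s <;> cases s' <;>
          simp only [hΦf, hΦt, Prod.mk.injEq] at heq
        · have e0 : c = c' := by
            have := congrFun heq.1 0; simpa using this
          simp [e0]
        · have e1 : m c = M c' := by
            have := congrFun heq.1 1; simpa using this
          have e2 : m c - 1 = M c' + 1 := by
            have := congrFun heq.2 1; simpa using this
          omega
        · have e1 : M c = m c' := by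
            have := congrFun heq.1 1; simpa using this
          have e2 : M c + 1 = m c' - 1 := by
            have := congrFun heq.2 1; simpa using this
          omega
        · have e0 : c = c' := by
            have := congrFun heq.1 0; simpa using this
          simp [e0]
    -- injection into H
    have hHbound : 2 * rows.card ≤ H.ncard := by
      set M : ℤ → ℤ := fun r => ((F.filter (fun x => x 1 = r)).image (fun x => x 0)).max.getD 0
      set m : ℤ → ℤ := fun r => ((F.filter (fun x => x 1 = r)).image (fun x => x 0)).min.getD 0
      have hrowmem : ∀ r t : ℤ,
          t ∈ (F.filter (fun x => x 1 = r)).image (fun x => x 0) ↔ ![t, r] ∈ C := by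
        intro r t
        simp only [Finset.mem_image, Finset.mem_filter]
        constructor
        · rintro ⟨x, ⟨hx, hx1⟩, hx0⟩
          have : x = ![t, r] := by rw [eta2 x, hx0, hx1]
          rwa [← this, ← hmemF]
        · intro h
          exact ⟨![t, r], ⟨(hmemF _).2 h, by simp⟩, by simp⟩
      have hMC : ∀ r ∈ rows, ![M r, r] ∈ C ∧ (∀ t, ![t, r] ∈ C → t ≤ M r) := by
        intro r hr
        obtain ⟨x, hx, hx1⟩ := Finset.mem_image.1 hr
        have hSne : ((F.filter (fun x => x 1 = r)).image (fun x => x 0)).Nonempty :=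
          ⟨x 0, Finset.mem_image_of_mem _ (Finset.mem_filter.2 ⟨hx, hx1⟩)⟩
        set S := (F.filter (fun x => x 1 = r)).image (fun x => x 0)
        have hmax : S.max = ↑(S.max' hSne) := (S.coe_max' hSne).symm
        have hMc : M r = S.max' hSne := by simp only [M]; rw [hmax]; rfl
        constructor
        · rw [← hrowmem, hMc]; exact S.max'_mem hSne
        · intro t ht
          rw [hMc]; exact S.le_max' t ((hrowmem r t).2 ht)
      have hmC : ∀ r ∈ rows, ![m r, r] ∈ C ∧ (∀ t, ![t, r] ∈ C → m r ≤ t) := by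
        intro r hr
        obtain ⟨x, hx, hx1⟩ := Finset.mem_image.1 hr
        have hSne : ((F.filter (fun x => x 1 = r)).image (fun x => x 0)).Nonempty :=
          ⟨x 0, Finset.mem_image_of_mem _ (Finset.mem_filter.2 ⟨hx, hx1⟩)⟩
        set S := (F.filter (fun x => x 1 = r)).image (fun x => x 0)
        have hmin : S.min = ↑(S.min' hSne) := (S.coe_min' hSne).symm
        have hmc : m r = S.min' hSne := by simp only [m]; rw [hmin]; rfl
        constructor
        · rw [← hrowmem, hmc]; exact S.min'_mem hSne
        · intro t ht
          rw [hmc]; exact S.min'_le t ((hrowmem r t).2 ht)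
      set Φ : ℤ × Bool → (Fin 2 → ℤ) × (Fin 2 → ℤ) := fun q =>
        if q.2 then (![M q.1, q.1], ![M q.1 + 1, q.1]) else (![m q.1, q.1], ![m q.1 - 1, q.1])
        with hΦ
      have hadjup : ∀ r t : ℤ, adj ![t, r] ![t + 1, r] := by
        intro r t
        rw [adj_iff_s11]; left
        refine ⟨by simp, Or.inl (by simp)⟩
      have hadjdn : ∀ r t : ℤ, adj ![t, r] ![t - 1, r] := by
        intro r t
        rw [adj_iff_s11]; left
        refine ⟨by simp, Or.inr (by simp)⟩
      have hcard2 : (rows ×ˢ (Finset.univ : Finset Bool)).card = 2 * rows.card := by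
        rw [Finset.card_product]; simp [Nat.mul_comm]
      have hΦf : ∀ r : ℤ, Φ (r, false) = (![m r, r], ![m r - 1, r]) := fun r => rfl
      have hΦt : ∀ r : ℤ, Φ (r, true) = (![M r, r], ![M r + 1, r]) := fun r => rfl
      rw [Set.ncard_eq_toFinset_card _ hHfin, ← hcard2]
      refine Finset.card_le_card_of_injOn Φ ?_ ?_
      · rintro ⟨r, s⟩ hq
        have hr : r ∈ rows := (Finset.mem_product.1 hq).1
        rw [Finset.mem_coe, Set.Finite.mem_toFinset]
        cases s
        · rw [hΦf]
          refine ⟨⟨(hmC r hr).1, ?_, hadjdn r (m r)⟩, by simp⟩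
          intro hmem
          have := (hmC r hr).2 (m r - 1) hmem
          omega
        · rw [hΦt]
          refine ⟨⟨(hMC r hr).1, ?_, hadjup r (M r)⟩, by simp⟩
          intro hmem
          have := (hMC r hr).2 (M r + 1) hmem
          omega
      · rintro ⟨r, s⟩ hq ⟨r', s'⟩ hq' heq
        cases s <;> cases s' <;>
          simp only [hΦf, hΦt, Prod.mk.injEq] at heq
        · have e0 : r = r' := by
            have := congrFun heq.1 1; simpa using this
          simp [e0]
        · have e1 : m r = M r' := by
            have := congrFun heq.1 0; simpa using this
          have e2 : m r - 1 = M r' + 1 := by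
            have := congrFun heq.2 0; simpa using this
          omega
        · have e1 : M r = m r' := by
            have := congrFun heq.1 0; simpa using this
          have e2 : M r + 1 = m r' - 1 := by
            have := congrFun heq.2 0; simpa using this
          omega
        · have e0 : r = r' := by
            have := congrFun heq.1 1; simpa using this
          simp [e0]
    omega


lemma rect_eq (A B : ℤ) :
    {x : Fin 2 → ℤ | (1 ≤ x 0 ∧ x 0 ≤ A) ∧ (1 ≤ x 1 ∧ x 1 ≤ B)} =
      ↑(((Finset.Icc (1:ℤ) A) ×ˢ (Finset.Icc (1:ℤ) B)).image
        (fun q : ℤ × ℤ => ![q.1, q.2])) := by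
  ext x
  simp only [Set.mem_setOf_eq, Finset.coe_image, Set.mem_image, Finset.mem_coe,
    Finset.mem_product, Finset.mem_Icc]
  constructor
  · rintro ⟨⟨h1, h2⟩, ⟨h3, h4⟩⟩
    exact ⟨(x 0, x 1), ⟨⟨h1, h2⟩, h3, h4⟩, (eta2 x).symm⟩
  · rintro ⟨⟨i, j⟩, ⟨⟨h1, h2⟩, h3, h4⟩, rfl⟩
    simp_all

lemma rect_finite (A B : ℤ) :
    ({x : Fin 2 → ℤ | (1 ≤ x 0 ∧ x 0 ≤ A) ∧ (1 ≤ x 1 ∧ x 1 ≤ B)}).Finite := by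
  rw [rect_eq]; exact Finset.finite_toSet _

lemma rect_ncard (A B : ℤ) :
    ({x : Fin 2 → ℤ | (1 ≤ x 0 ∧ x 0 ≤ A) ∧ (1 ≤ x 1 ∧ x 1 ≤ B)}).ncard
      = A.toNat * B.toNat := by
  rw [rect_eq, Set.ncard_coe_finset]
  rw [Finset.card_image_of_injOn]
  · rw [Finset.card_product, Int.card_Icc, Int.card_Icc]
    norm_num
  · rintro ⟨i, j⟩ _ ⟨i', j'⟩ _ h
    have h0 : i = i' := by have := congrFun h 0; simpa using this
    have h1 : j = j' := by have := congrFun h 1; simpa using this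
    simp [h0, h1]

lemma rect_theta_le (A B : ℤ) (hA : 1 ≤ A) (hB : 1 ≤ B) :
    thetaCard {x : Fin 2 → ℤ | (1 ≤ x 0 ∧ x 0 ≤ A) ∧ (1 ≤ x 1 ∧ x 1 ≤ B)}
      ≤ 2 * A.toNat + 2 * B.toNat := by
  classical
  set R := {x : Fin 2 → ℤ | (1 ≤ x 0 ∧ x 0 ≤ A) ∧ (1 ≤ x 1 ∧ x 1 ≤ B)} with hR
  set E : Finset ((Fin 2 → ℤ) × (Fin 2 → ℤ)) :=
    ((Finset.Icc (1:ℤ) A).image (fun i => (![i, (1:ℤ)], ![i, (0:ℤ)]))) ∪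
    ((Finset.Icc (1:ℤ) A).image (fun i => (![i, B], ![i, B + 1]))) ∪
    ((Finset.Icc (1:ℤ) B).image (fun j => (![(1:ℤ), j], ![(0:ℤ), j]))) ∪
    ((Finset.Icc (1:ℤ) B).image (fun j => (![A, j], ![A + 1, j]))) with hE
  have hsub : edgeBoundary R ⊆ ↑E := by
    rintro ⟨x, y⟩ ⟨hx, hy, hadj⟩
    simp only [hR, Set.mem_setOf_eq] at hx hy
    simp only [hE, Finset.coe_union, Set.mem_union, Finset.coe_image, Set.mem_image,
      Finset.mem_coe, Finset.mem_Icc]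
    have hy4 : y 0 < 1 ∨ A < y 0 ∨ y 1 < 1 ∨ B < y 1 := by
      by_contra h
      push_neg at h
      exact hy ⟨⟨h.1, h.2.1⟩, h.2.2.1, h.2.2.2⟩
    rcases (adj_iff_s11 x y).1 hadj with ⟨h1, h0 | h0⟩ | ⟨h0, h1 | h1⟩
    · -- y0 = x0 + 1 : right edge, x 0 = A
      have e0 : x 0 = A := by omega
      refine Or.inr ⟨x 1, ⟨hx.2.1, hx.2.2⟩, ?_⟩
      have hx' : x = ![A, x 1] := by
        conv_lhs => rw [eta2 x, e0]
      have hy' : y = ![A + 1, x 1] := by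
        conv_lhs => rw [eta2 y]
        rw [show y 0 = A + 1 by omega, show y 1 = x 1 by omega]
      rw [Prod.mk.injEq]; exact ⟨hx'.symm, hy'.symm⟩
    · -- x0 = y0 + 1 : left edge, x 0 = 1
      have e0 : x 0 = 1 := by omega
      refine Or.inl (Or.inr ⟨x 1, ⟨hx.2.1, hx.2.2⟩, ?_⟩)
      have hx' : x = ![1, x 1] := by
        conv_lhs => rw [eta2 x, e0]
      have hy' : y = ![0, x 1] := by
        conv_lhs => rw [eta2 y]
        rw [show y 0 = 0 by omega, show y 1 = x 1 by omega]
      rw [Prod.mk.injEq]; exact ⟨hx'.symm, hy'.symm⟩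
    · -- y1 = x1 + 1 : top edge, x 1 = B
      have e1 : x 1 = B := by omega
      refine Or.inl (Or.inl (Or.inr ⟨x 0, ⟨hx.1.1, hx.1.2⟩, ?_⟩))
      have hx' : x = ![x 0, B] := by
        conv_lhs => rw [eta2 x, e1]
      have hy' : y = ![x 0, B + 1] := by
        conv_lhs => rw [eta2 y]
        rw [show y 0 = x 0 by omega, show y 1 = B + 1 by omega]
      rw [Prod.mk.injEq]; exact ⟨hx'.symm, hy'.symm⟩
    · -- x1 = y1 + 1 : bottom edge, x 1 = 1
      have e1 : x 1 = 1 := by omega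
      refine Or.inl (Or.inl (Or.inl ⟨x 0, ⟨hx.1.1, hx.1.2⟩, ?_⟩))
      have hx' : x = ![x 0, 1] := by
        conv_lhs => rw [eta2 x, e1]
      have hy' : y = ![x 0, 0] := by
        conv_lhs => rw [eta2 y]
        rw [show y 0 = x 0 by omega, show y 1 = 0 by omega]
      rw [Prod.mk.injEq]; exact ⟨hx'.symm, hy'.symm⟩
  have h1 : thetaCard R ≤ E.card := by
    rw [thetaCard, ← Set.ncard_coe_finset]
    exact Set.ncard_le_ncard hsub (Finset.finite_toSet E)
  refine h1.trans ?_
  have hIA : (Finset.Icc (1:ℤ) A).card = A.toNat := by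
    rw [Int.card_Icc]; norm_num
  have hIB : (Finset.Icc (1:ℤ) B).card = B.toNat := by
    rw [Int.card_Icc]; norm_num
  calc E.card ≤ _ := Finset.card_union_le _ _
    _ ≤ _ := Nat.add_le_add_right (Finset.card_union_le _ _) _
    _ ≤ _ := Nat.add_le_add_right (Nat.add_le_add_right (Finset.card_union_le _ _) _) _
    _ ≤ A.toNat + A.toNat + B.toNat + B.toNat := by
        gcongr <;> first
          | exact (Finset.card_image_le).trans_eq hIA
          | exact (Finset.card_image_le).trans_eq hIB
    _ ≤ 2 * A.toNat + 2 * B.toNat := by omega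

lemma arith_bound (ℓ p a b : ℕ) (hp2 : p * p ≤ ℓ) (hpl : p + 1 ≤ ℓ)
    (ha : 1 ≤ a) (hb : 1 ≤ b) (hab : ℓ * (ℓ - p) ≤ a * b) :
    4 * ℓ - 2 * p ≤ 2 * a + 2 * b := by
  by_contra hcon
  push_neg at hcon
  have hc : 2 * a + 2 * b + 2 * p + 1 ≤ 4 * ℓ := by omega
  have hab' : (ℓ : ℤ) * ((ℓ : ℤ) - (p : ℤ)) ≤ (a : ℤ) * (b : ℤ) := by
    have h := hab
    zify [show p ≤ ℓ by omega] at h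
    linarith
  have hc' : 2 * (a : ℤ) + 2 * (b : ℤ) + 2 * (p : ℤ) + 1 ≤ 4 * (ℓ : ℤ) := by exact_mod_cast hc
  have hp2' : (p : ℤ) * (p : ℤ) ≤ (ℓ : ℤ) := by exact_mod_cast hp2
  have hpl' : (p : ℤ) + 1 ≤ (ℓ : ℤ) := by exact_mod_cast hpl
  have hA : 1 ≤ (a : ℤ) := by exact_mod_cast ha
  have hB : 1 ≤ (b : ℤ) := by exact_mod_cast hb
  have hP : 0 ≤ (p : ℤ) := by positivity
  have h1 : (a : ℤ) + (b : ℤ) ≤ 2 * (ℓ : ℤ) - (p : ℤ) - 1 := by omega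
  have h2 : ((a : ℤ) + b) * ((a : ℤ) + b) ≤
      (2 * (ℓ : ℤ) - p - 1) * (2 * (ℓ : ℤ) - p - 1) :=
    mul_self_le_mul_self (by linarith) h1
  nlinarith [sq_nonneg ((a : ℤ) - b)]


/-- for `p ≤ ⌊√ℓ⌋`, the rectangle `{1,…,ℓ-p} × {1,…,ℓ} ⊂ ℤ²`
is an edge-isoperimetric minimizer: `#Θ₂(P) = EIP²(ℓ(ℓ-p))`. -/
theorem rectangle_minimizer (ℓ p : ℕ) (hp : p ≤ Nat.sqrt ℓ) :
    thetaCard {x : Fin 2 → ℤ | (1 ≤ x 0 ∧ x 0 ≤ (ℓ : ℤ) - (p : ℤ)) ∧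
        (1 ≤ x 1 ∧ x 1 ≤ (ℓ : ℤ))} = EIP 2 (ℓ * (ℓ - p)) := by
  have hp2 : p * p ≤ ℓ := Nat.le_sqrt.1 hp
  have hple : p ≤ ℓ := hp.trans (Nat.sqrt_le_self ℓ)
  set R := {x : Fin 2 → ℤ | (1 ≤ x 0 ∧ x 0 ≤ (ℓ : ℤ) - (p : ℤ)) ∧
      (1 ≤ x 1 ∧ x 1 ≤ (ℓ : ℤ))} with hRdef
  have hRfin : R.Finite := rect_finite ((ℓ : ℤ) - p) ℓ
  have hRcard : R.ncard = ℓ * (ℓ - p) := by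
    rw [hRdef, rect_ncard]
    have h1 : ((ℓ : ℤ) - p).toNat = ℓ - p := by omega
    have h2 : ((ℓ : ℤ)).toNat = ℓ := by omega
    rw [h1, h2, Nat.mul_comm]
  by_cases hn : ℓ * (ℓ - p) = 0
  · have hlp : ℓ ≤ p := by
      rcases Nat.mul_eq_zero.1 hn with h | h <;> omega
    have hRe : R = ∅ := by
      ext x
      simp only [hRdef, Set.mem_setOf_eq, Set.mem_empty_iff_false, iff_false]
      rintro ⟨⟨h1, h2⟩, _⟩
      omega
    have ht0 : thetaCard (∅ : Set (Fin 2 → ℤ)) = 0 := by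
      have he : edgeBoundary (∅ : Set (Fin 2 → ℤ)) = ∅ := by
        ext q; simp [edgeBoundary]
      rw [thetaCard, he, Set.ncard_empty]
    rw [hRe, hn, ht0]
    have hmem : 0 ∈ {m | ∃ C : Set (Fin 2 → ℤ), C.Finite ∧ C.ncard = 0 ∧ thetaCard C = m} :=
      ⟨∅, Set.finite_empty, Set.ncard_empty _, ht0⟩
    exact (Nat.le_zero.1 (Nat.sInf_le hmem)).symm
  · have hl1 : p + 1 ≤ ℓ := by
      have := Nat.mul_ne_zero_iff.1 hn
      omega
    have lower : ∀ M ∈ {m | ∃ C : Set (Fin 2 → ℤ),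
        C.Finite ∧ C.ncard = ℓ * (ℓ - p) ∧ thetaCard C = m}, 4 * ℓ - 2 * p ≤ M := by
      rintro M ⟨C, hCf, hCc, rfl⟩
      have hCne : C.Nonempty := by
        rw [Set.nonempty_iff_ne_empty]
        rintro rfl
        rw [Set.ncard_empty] at hCc
        omega
      obtain ⟨a, b, ha, hb, hab, hper⟩ := projection_bound C hCf hCne
      rw [hCc] at hab
      exact le_trans (arith_bound ℓ p a b hp2 hl1 ha hb hab) hper
    have hupper : thetaCard R ≤ 4 * ℓ - 2 * p := by
      have h := rect_theta_le ((ℓ : ℤ) - p) ℓ (by omega) (by omega)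
      rw [← hRdef] at h
      refine h.trans ?_
      omega
    have hlowR : 4 * ℓ - 2 * p ≤ thetaCard R := lower _ ⟨R, hRfin, hRcard, rfl⟩
    have hteq : thetaCard R = 4 * ℓ - 2 * p := le_antisymm hupper hlowR
    unfold EIP
    refine le_antisymm ?_ (Nat.sInf_le ⟨R, hRfin, hRcard, rfl⟩)
    rw [hteq]
    exact le_csInf ⟨_, ⟨R, hRfin, hRcard, rfl⟩⟩ lower
end
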